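/- The constant term of the Laplace polynomial Q_{2n} satisfies q_{2n,0} = 2^n · n! for every integer n ≥ 0. -/

import Mathlib

open Polynomial

/-- The Laplace polynomials `P_k`. -/
noncomputable def laplaceP : ℕ → Polynomial ℝ
  | 0 => 1
  | k + 1 => X * laplaceP k + derivative (laplaceP k)

/-- The Laplace polynomials `Q_k`. -/
noncomputable def laplaceQ : ℕ → Polynomial ℝ
  | 0 => 1
  | k + 1 => laplaceP (k + 1) + derivative (laplaceQ k)

open Finset

lemma laplaceP_deriv (k : ℕ) :
    derivative (laplaceP (k + 1)) = ((k : ℝ) + 1) • laplaceP k := by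
  induction k with
  | zero => simp [laplaceP]
  | succ k ih =>
    have hdef : laplaceP (k + 2) = X * laplaceP (k + 1) + derivative (laplaceP (k + 1)) := rfl
    have hdef2 : laplaceP (k + 1) = X * laplaceP k + derivative (laplaceP k) := rfl
    rw [hdef, derivative_add, derivative_mul, derivative_X, ih, derivative_smul,
      one_mul, mul_smul_comm, add_assoc, ← smul_add, ← hdef2]
    push_cast
    module

lemma laplaceP_deriv' (m : ℕ) :
    derivative (laplaceP m) = (m : ℝ) • laplaceP (m - 1) := by
  cases m with
  | zero => simp [laplaceP]
  | succ k => rw [laplaceP_deriv]; push_cast; simp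

lemma laplaceQ_eq (k : ℕ) :
    laplaceQ k = ∑ j ∈ range (k + 1),
      (((k - j).descFactorial j : ℝ)) • laplaceP (k - 2 * j) := by
  induction k with
  | zero => simp [laplaceQ, laplaceP]
  | succ k ih =>
    have hdef : laplaceQ (k + 1) = laplaceP (k + 1) + derivative (laplaceQ k) := rfl
    rw [hdef, ih, derivative_sum, Finset.sum_range_succ' (fun j =>
      (((k + 1 - j).descFactorial j : ℝ)) • laplaceP (k + 1 - 2 * j))]
    simp only [Nat.sub_zero, Nat.descFactorial_zero, Nat.cast_one, one_smul, Nat.mul_zero,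
      Nat.sub_zero]
    rw [add_comm]
    congr 1
    refine Finset.sum_congr rfl fun j _ => ?_
    rw [derivative_smul, laplaceP_deriv']
    have h1 : k + 1 - (j + 1) = k - j := by omega
    have h2 : (k - j).descFactorial (j + 1) = (k - 2 * j) * (k - j).descFactorial j := by
      rw [Nat.descFactorial_succ]
      congr 1
      omega
    have h3 : k - 2 * j - 1 = k + 1 - 2 * (j + 1) := by omega
    rw [h1, h2, h3, smul_smul, Nat.cast_mul]
    ring_nf

lemma laplaceP_coeff (m : ℕ) :
    (laplaceP (2 * m)).coeff 0 = ((2 * m).factorial : ℝ) / (2 ^ m * m.factorial) ∧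
    (laplaceP (2 * m + 1)).coeff 0 = 0 := by
  induction m with
  | zero =>
    constructor
    · simp [laplaceP]
    · norm_num [laplaceP]
  | succ m ih =>
    have key : ∀ k : ℕ, (laplaceP (k + 2)).coeff 0 = ((k : ℝ) + 1) * (laplaceP k).coeff 0 := by
      intro k
      have hdef : laplaceP (k + 2) = X * laplaceP (k + 1) + derivative (laplaceP (k + 1)) := rfl
      rw [hdef, laplaceP_deriv, coeff_add, mul_coeff_zero, coeff_X_zero, zero_mul, zero_add,
        coeff_smul, smul_eq_mul]
    constructor
    · have h : 2 * (m + 1) = 2 * m + 2 := by ring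
      rw [h, key, ih.1]
      have e1 : (2 * m + 2).factorial = (2 * m + 2) * ((2 * m + 1) * (2 * m).factorial) := by
        rw [Nat.factorial_succ, Nat.factorial_succ]
      rw [e1]
      have h2 : ((2:ℝ) ^ m * m.factorial) ≠ 0 := by positivity
      have h3 : ((2:ℝ) ^ (m+1) * (m+1).factorial) ≠ 0 := by positivity
      rw [Nat.factorial_succ]
      field_simp
      push_cast; ring
    · have h : 2 * (m + 1) + 1 = (2 * m + 1) + 2 := by ring
      rw [h, key, ih.2, mul_zero]

lemma telescope (n m : ℕ) :
    ∑ i ∈ range (m + 1), ((n + i).factorial : ℝ) * ((n : ℝ) + 1 - i) / (2 ^ i * i.factorial)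
      = ((n + 1 + m).factorial : ℝ) / (2 ^ m * m.factorial) := by
  induction m with
  | zero => simp [Nat.factorial_succ]; ring
  | succ m ih =>
    rw [Finset.sum_range_succ, ih]
    have e1 : n + 1 + (m + 1) = (n + 1 + m) + 1 := by ring
    have e2 : n + (m + 1) = (n + 1 + m) := by ring
    rw [e1, e2, Nat.factorial_succ (n := m), Nat.factorial_succ (n := n + 1 + m)]
    have h2 : ((2:ℝ) ^ m * m.factorial) ≠ 0 := by positivity
    have h3 : ((m:ℝ) + 1) ≠ 0 := by positivity
    field_simp
    push_cast; ring

lemma sumA (n : ℕ) :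
    ∑ i ∈ range (n + 1), ((n + i).factorial : ℝ) / (2 ^ i * i.factorial)
      = 2 ^ n * n.factorial := by
  induction n with
  | zero => simp
  | succ n ih =>
    rw [Finset.sum_range_succ]
    have key : ∀ i : ℕ, ((n + 1 + i).factorial : ℝ) / (2 ^ i * i.factorial)
        = 2 * ((n:ℝ) + 1) * (((n + i).factorial : ℝ) / (2 ^ i * i.factorial))
          - ((n + i).factorial : ℝ) * ((n : ℝ) + 1 - i) / (2 ^ i * i.factorial) := by
      intro i
      have e : n + 1 + i = (n + i) + 1 := by ring
      rw [e, Nat.factorial_succ]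
      have h2 : ((2:ℝ) ^ i * i.factorial) ≠ 0 := by positivity
      field_simp
      push_cast; ring
    have hsum : ∑ i ∈ range (n + 1), ((n + 1 + i).factorial : ℝ) / (2 ^ i * i.factorial)
        = 2 * ((n:ℝ) + 1) * (2 ^ n * n.factorial)
          - ((n + 1 + n).factorial : ℝ) / (2 ^ n * n.factorial) := by
      rw [Finset.sum_congr rfl fun i _ => key i, Finset.sum_sub_distrib, ← Finset.mul_sum, ih,
        telescope]
    rw [hsum]
    have e3 : n + 1 + (n + 1) = (n + 1 + n) + 1 := by ring
    rw [e3, Nat.factorial_succ, Nat.factorial_succ (n := n)]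
    have h2 : ((2:ℝ) ^ n * n.factorial) ≠ 0 := by positivity
    have h4 : ((2:ℝ) ^ (n+1) * ((n+1) * n.factorial)) ≠ 0 := by positivity
    have e4 : ((n + 1 + n : ℕ) : ℝ) + 1 = 2 * ((n:ℝ) + 1) := by push_cast; ring
    field_simp
    push_cast; ring

/-- The constant term of `Q_{2n}` equals `2^n·n!`. -/
theorem laplaceQ_coeff_zero (n : ℕ) :
    (laplaceQ (2 * n)).coeff 0 = 2 ^ n * n.factorial := by
  rw [laplaceQ_eq, finset_sum_coeff]
  have step1 : ∑ j ∈ range (2 * n + 1),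
      ((((2 * n - j).descFactorial j : ℝ)) • laplaceP (2 * n - 2 * j)).coeff 0
      = ∑ j ∈ range (n + 1),
      (((2 * n - j).descFactorial j : ℝ)) * (laplaceP (2 * n - 2 * j)).coeff 0 := by
    rw [← Finset.sum_subset (Finset.range_subset_range.mpr (by omega : n + 1 ≤ 2 * n + 1))]
    · exact Finset.sum_congr rfl fun j _ => by rw [coeff_smul, smul_eq_mul]
    · intro j hj hj2
      simp only [Finset.mem_range] at hj hj2
      have : (2 * n - j).descFactorial j = 0 :=
        Nat.descFactorial_of_lt (by omega)
      rw [coeff_smul, this, Nat.cast_zero, zero_smul]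
  rw [step1]
  have step2 : ∀ j ∈ range (n + 1),
      (((2 * n - j).descFactorial j : ℝ)) * (laplaceP (2 * n - 2 * j)).coeff 0
      = ((n + (n - j)).factorial : ℝ) / (2 ^ (n - j) * (n - j).factorial) := by
    intro j hj
    simp only [Finset.mem_range] at hj
    have hjn : j ≤ n := by omega
    have e1 : 2 * n - 2 * j = 2 * (n - j) := by omega
    rw [e1, (laplaceP_coeff (n - j)).1]
    have e2 : 2 * n - j = n + (n - j) := by omega
    rw [e2]
    have hfd : ((2 * (n - j)).factorial) * ((n + (n - j)).descFactorial j) =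
        (n + (n - j)).factorial := by
      have := Nat.factorial_mul_descFactorial (n := n + (n - j)) (k := j) (by omega)
      rwa [show n + (n - j) - j = 2 * (n - j) by omega] at this
    have h2 : ((2:ℝ) ^ (n - j) * (n - j).factorial) ≠ 0 := by positivity
    have h5 : (((2 * (n - j)).factorial : ℝ)) ≠ 0 := by positivity
    have hfd' : (n + (n - j)).descFactorial j * (2 * (n - j)).factorial =
        (n + (n - j)).factorial := by rw [mul_comm]; exact hfd
    field_simp
    exact_mod_cast hfd'
  rw [Finset.sum_congr rfl step2]
  have hrefl := Finset.sum_range_reflect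
    (fun i => ((n + i).factorial : ℝ) / (2 ^ i * i.factorial)) (n + 1)
  simp only [Nat.add_sub_cancel] at hrefl
  calc ∑ j ∈ range (n + 1), ((n + (n - j)).factorial : ℝ) / (2 ^ (n - j) * (n - j).factorial)
      = ∑ i ∈ range (n + 1), ((n + i).factorial : ℝ) / (2 ^ i * i.factorial) := by
        rw [← hrefl]
    _ = 2 ^ n * n.factorial := sumA n
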